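/- Let d ≥ 1, N ≥ 1, and let Γ, Ω be nonempty finite types. Let p : Fin N → Fin N → Γ → ((ZMod d) × (ZMod d) × Ω → ℝ) be a family of probability distributions (nonnegative, summing to 1 for each triple of settings (a,b,c)). Assume the non-signaling conditions: (i) the (X,Y)-marginal of p(a,b,c) does not depend on c; (ii) the (X,Z)-marginal of p(a,b,c) does not depend on b; (iii) the (Y,Z)-marginal of p(a,b,c) does not depend on a. Then for every a ∈ Fin N, every c ∈ Γ, every x ∈ ZMod d: (1/d)·Σ_{z ∈ Ω} |P_{XZ}(x,z|a,c) − (1/d)·P_Z(z|c)| ≤ (d/4)·I_N, where P_{XZ}(·|a,c) is the (X,Z)-marginal (independent of b by (ii)), P_Z(·|c) is the Z-marginal (independent of a and b), and I_N is the chained correlation quantity of the (X,Y)-marginals. -/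

import Mathlib

open Finset

/-- `E[val(X − Y)]` for a joint distribution `π` on `(ZMod d) × (ZMod d)`. -/
noncomputable def expValXsubY {d : ℕ} [NeZero d] (π : ZMod d × ZMod d → ℝ) : ℝ :=
  ∑ w : ZMod d × ZMod d, ((w.1 - w.2).val : ℝ) * π w

/-- `E[val(Y − X)]` for a joint distribution `π` on `(ZMod d) × (ZMod d)`. -/
noncomputable def expValYsubX {d : ℕ} [NeZero d] (π : ZMod d × ZMod d → ℝ) : ℝ :=
  ∑ w : ZMod d × ZMod d, ((w.2 - w.1).val : ℝ) * π w

/-- `E[val(Y − X − 1)]` for a joint distribution `π` on `(ZMod d) × (ZMod d)`. -/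
noncomputable def expValYsubXsubOne {d : ℕ} [NeZero d] (π : ZMod d × ZMod d → ℝ) : ℝ :=
  ∑ w : ZMod d × ZMod d, ((w.2 - w.1 - 1).val : ℝ) * π w

/-- The chained correlation quantity
`I_N := Σ_{i=1}^{N−1} ( E_{Q(i,i)}[val(X−Y)] + E_{Q(i+1,i)}[val(Y−X)] )
      + E_{Q(N,N)}[val(X−Y)] + E_{Q(1,N)}[val(Y−X−1)]`,
for a family `Q` of joint distributions on `(ZMod d) × (ZMod d)` indexed by settings
`a, b ∈ {1, …, N}` (represented by `Fin N`). -/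
noncomputable def chainedIN (d N : ℕ) [NeZero d] (hN : 0 < N)
    (Q : Fin N → Fin N → (ZMod d × ZMod d → ℝ)) : ℝ :=
  (∑ i ∈ (Finset.range (N - 1)).attach,
      (expValXsubY (Q ⟨i.1, by have := Finset.mem_range.mp i.2; omega⟩
                      ⟨i.1, by have := Finset.mem_range.mp i.2; omega⟩) +
       expValYsubX (Q ⟨i.1 + 1, by have := Finset.mem_range.mp i.2; omega⟩
                      ⟨i.1, by have := Finset.mem_range.mp i.2; omega⟩)))
    + expValXsubY (Q ⟨N - 1, by omega⟩ ⟨N - 1, by omega⟩)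
    + expValYsubXsubOne (Q ⟨0, hN⟩ ⟨N - 1, by omega⟩)

/-- Theorem 1 of the paper: for any non-signaling family of distributions
`p a b c` on `(ZMod d) × (ZMod d) × Ω`, the statistical distance between the
`(X,Z)`-marginal and the product of the uniform distribution with the `Z`-marginal is
bounded by `(d/4)·I_N` of the `(X,Y)`-marginals, for all settings `a, c` and outcomes `x`. -/

lemma sum_range_zmod (n : ℕ) [NeZero n] (f : ZMod n → ℝ) :
    ∑ i ∈ Finset.range n, f (i : ZMod n) = ∑ u : ZMod n, f u := by
  refine Finset.sum_nbij' (fun t => ((t : ℕ) : ZMod n)) (fun u => u.val) ?_ ?_ ?_ ?_ ?_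
  · intro t ht; exact Finset.mem_univ _
  · intro u _; exact Finset.mem_range.mpr (ZMod.val_lt u)
  · intro t ht; exact ZMod.val_natCast_of_lt (Finset.mem_range.mp ht)
  · intro u _; exact ZMod.natCast_rightInverse u
  · intro t ht; rfl

lemma sum_shift {d : ℕ} [NeZero d] (F : ZMod d → ℝ) (e : ZMod d) :
    ∑ u : ZMod d, F (u - e) = ∑ u : ZMod d, F u :=
  Fintype.sum_equiv (Equiv.subRight e) _ _ fun u => rfl

lemma tele_sum {ι : Type*} (s : Finset ι) (F : ℕ → ι → ℝ) (m : ℕ) :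
    ∑ i ∈ s, |F 0 i - F m i| ≤ ∑ j ∈ Finset.range m, ∑ i ∈ s, |F j i - F (j+1) i| := by
  induction m with
  | zero => simp
  | succ m ih =>
    calc ∑ i ∈ s, |F 0 i - F (m+1) i|
        ≤ ∑ i ∈ s, (|F 0 i - F m i| + |F m i - F (m+1) i|) :=
          Finset.sum_le_sum fun i _ => abs_sub_le _ _ _
      _ = (∑ i ∈ s, |F 0 i - F m i|) + ∑ i ∈ s, |F m i - F (m+1) i| :=
          Finset.sum_add_distrib
      _ ≤ _ := by rw [Finset.sum_range_succ]; exact add_le_add_left ih _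

lemma sum_range_two_mul (n : ℕ) (f : ℕ → ℝ) :
    ∑ i ∈ Finset.range (2*n), f i = ∑ t ∈ Finset.range n, (f (2*t) + f (2*t+1)) := by
  induction n with
  | zero => simp
  | succ n ih =>
    rw [Finset.sum_range_succ, ← ih, show 2*(n+1) = (2*n+1)+1 by ring,
      Finset.sum_range_succ, Finset.sum_range_succ]
    ring

lemma sum_range_shift (N : ℕ) [NeZero N] (α : ℕ) (f : ℕ → ℝ) (hf : ∀ m, f m = f (m % N)) :
    ∑ t ∈ Finset.range N, f (α + t) = ∑ j ∈ Finset.range N, f j := by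
  have key : ∀ m : ℕ, f m = (fun u : ZMod N => f u.val) ((m : ℕ) : ZMod N) := by
    intro m; simp only [ZMod.val_natCast]; exact hf m
  calc ∑ t ∈ Finset.range N, f (α + t)
      = ∑ t ∈ Finset.range N, (fun u : ZMod N => f u.val) ((α : ZMod N) + ((t : ℕ) : ZMod N)) := by
        refine Finset.sum_congr rfl fun t _ => ?_
        rw [← Nat.cast_add]; exact key (α + t)
    _ = ∑ u : ZMod N, (fun u : ZMod N => f u.val) ((α : ZMod N) + u) :=
        sum_range_zmod N (fun u => f ((α : ZMod N) + u).val)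
    _ = ∑ u : ZMod N, (fun u : ZMod N => f u.val) u :=
        Fintype.sum_equiv (Equiv.addLeft (α : ZMod N)) _ _ fun u => rfl
    _ = ∑ j ∈ Finset.range N, (fun u : ZMod N => f u.val) ((j : ℕ) : ZMod N) :=
        (sum_range_zmod N _).symm
    _ = ∑ j ∈ Finset.range N, f j := by
        refine Finset.sum_congr rfl fun j hj => ?_
        simp only [ZMod.val_natCast]
        rw [Nat.mod_eq_of_lt (Finset.mem_range.mp hj)]

lemma core_bound {d : ℕ} [NeZero d] {Ω : Type} [Fintype Ω]
    (q : ZMod d × ZMod d × Ω → ℝ) (hq : ∀ w, 0 ≤ q w) (s : ZMod d) :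
    ∑ x : ZMod d, ∑ z : Ω, |(∑ x' : ZMod d, q (x', x, z)) - (∑ y : ZMod d, q (x - s, y, z))| ≤
      2 * ∑ w : ZMod d × ZMod d,
        (if w.2 = w.1 + s then (0:ℝ) else 1) * ∑ z : Ω, q (w.1, w.2, z) := by
  have e1 : ∀ (x : ZMod d) (z : Ω),
      (∑ x' : ZMod d, (if x = x' + s then (0:ℝ) else 1) * q (x', x, z))
        = (∑ x' : ZMod d, q (x', x, z)) - q (x - s, x, z) := by
    intro x z
    have h : ∀ x' : ZMod d, (if x = x' + s then (0:ℝ) else 1) * q (x', x, z)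
        = q (x', x, z) - (if x' = x - s then (1:ℝ) else 0) * q (x', x, z) := by
      intro x'
      by_cases h : x = x' + s
      · rw [if_pos h, if_pos (by rw [eq_sub_iff_add_eq, ← h])]; ring
      · rw [if_neg h, if_neg (fun hc => h (by rw [hc, sub_add_cancel]))]; ring
    rw [Finset.sum_congr rfl (fun x' _ => h x'), Finset.sum_sub_distrib]
    congr 1
    simp [Finset.sum_ite_eq']
  have e2 : ∀ (x : ZMod d) (z : Ω),
      (∑ y : ZMod d, (if y = x then (0:ℝ) else 1) * q (x - s, y, z))
        = (∑ y : ZMod d, q (x - s, y, z)) - q (x - s, x, z) := by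
    intro x z
    have h : ∀ y : ZMod d, (if y = x then (0:ℝ) else 1) * q (x - s, y, z)
        = q (x - s, y, z) - (if y = x then (1:ℝ) else 0) * q (x - s, y, z) := by
      intro y; by_cases h : y = x <;> simp [h]
    rw [Finset.sum_congr rfl (fun y _ => h y), Finset.sum_sub_distrib]
    congr 1
    simp [Finset.sum_ite_eq']
  have key : ∀ (x : ZMod d) (z : Ω),
      |(∑ x' : ZMod d, q (x', x, z)) - (∑ y : ZMod d, q (x - s, y, z))| ≤
        (∑ x' : ZMod d, (if x = x' + s then (0:ℝ) else 1) * q (x', x, z))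
        + (∑ y : ZMod d, (if y = x then (0:ℝ) else 1) * q (x - s, y, z)) := by
    intro x z
    have habs : |(∑ x' : ZMod d, q (x', x, z)) - (∑ y : ZMod d, q (x - s, y, z))|
        = |(∑ x' : ZMod d, (if x = x' + s then (0:ℝ) else 1) * q (x', x, z))
          - (∑ y : ZMod d, (if y = x then (0:ℝ) else 1) * q (x - s, y, z))| := by
      rw [e1, e2]; ring_nf
    rw [habs]
    have h1 : (0:ℝ) ≤ ∑ x' : ZMod d, (if x = x' + s then (0:ℝ) else 1) * q (x', x, z) :=
      Finset.sum_nonneg fun x' _ => mul_nonneg (by positivity) (hq _)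
    have h2 : (0:ℝ) ≤ ∑ y : ZMod d, (if y = x then (0:ℝ) else 1) * q (x - s, y, z) :=
      Finset.sum_nonneg fun y _ => mul_nonneg (by positivity) (hq _)
    calc |_ - _| ≤ |_| + |_| := abs_sub _ _
      _ = _ + _ := by rw [abs_of_nonneg h1, abs_of_nonneg h2]
  have T1 : ∑ x : ZMod d, ∑ z : Ω, ∑ x' : ZMod d, (if x = x' + s then (0:ℝ) else 1) * q (x', x, z)
      = ∑ w : ZMod d × ZMod d, (if w.2 = w.1 + s then (0:ℝ) else 1) * ∑ z : Ω, q (w.1, w.2, z) := by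
    have step1 : ∀ x : ZMod d, ∑ z : Ω, ∑ x' : ZMod d, (if x = x' + s then (0:ℝ) else 1) * q (x', x, z)
        = ∑ x' : ZMod d, (if x = x' + s then (0:ℝ) else 1) * ∑ z : Ω, q (x', x, z) := by
      intro x
      rw [Finset.sum_comm]
      exact Finset.sum_congr rfl fun x' _ => (Finset.mul_sum _ _ _).symm
    rw [Finset.sum_congr rfl fun x _ => step1 x, Finset.sum_comm, Fintype.sum_prod_type]
  have T2 : ∑ x : ZMod d, ∑ z : Ω, ∑ y : ZMod d, (if y = x then (0:ℝ) else 1) * q (x - s, y, z)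
      = ∑ w : ZMod d × ZMod d, (if w.2 = w.1 + s then (0:ℝ) else 1) * ∑ z : Ω, q (w.1, w.2, z) := by
    have step1 : ∀ x : ZMod d, ∑ z : Ω, ∑ y : ZMod d, (if y = x then (0:ℝ) else 1) * q (x - s, y, z)
        = ∑ y : ZMod d, (if y = x then (0:ℝ) else 1) * ∑ z : Ω, q (x - s, y, z) := by
      intro x
      rw [Finset.sum_comm]
      exact Finset.sum_congr rfl fun y _ => (Finset.mul_sum _ _ _).symm
    rw [Finset.sum_congr rfl fun x _ => step1 x]
    rw [show (∑ x : ZMod d, ∑ y : ZMod d, (if y = x then (0:ℝ) else 1) * ∑ z : Ω, q (x - s, y, z))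
        = ∑ u : ZMod d, ∑ y : ZMod d, (if y = u + s then (0:ℝ) else 1) * ∑ z : Ω, q (u + s - s, y, z) from
      (Fintype.sum_equiv (Equiv.addRight s)
        (fun u => ∑ y : ZMod d, (if y = u + s then (0:ℝ) else 1) * ∑ z : Ω, q (u + s - s, y, z))
        (fun x => ∑ y : ZMod d, (if y = x then (0:ℝ) else 1) * ∑ z : Ω, q (x - s, y, z))
        (fun u => rfl)).symm]
    rw [Fintype.sum_prod_type]
    refine Finset.sum_congr rfl fun u _ => Finset.sum_congr rfl fun y _ => ?_
    rw [add_sub_cancel_right]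
  calc ∑ x : ZMod d, ∑ z : Ω, |(∑ x' : ZMod d, q (x', x, z)) - (∑ y : ZMod d, q (x - s, y, z))|
      ≤ ∑ x : ZMod d, ∑ z : Ω,
          ((∑ x' : ZMod d, (if x = x' + s then (0:ℝ) else 1) * q (x', x, z))
          + (∑ y : ZMod d, (if y = x then (0:ℝ) else 1) * q (x - s, y, z))) :=
        Finset.sum_le_sum fun x _ => Finset.sum_le_sum fun z _ => key x z
    _ = (∑ x : ZMod d, ∑ z : Ω, ∑ x' : ZMod d, (if x = x' + s then (0:ℝ) else 1) * q (x', x, z))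
        + ∑ x : ZMod d, ∑ z : Ω, ∑ y : ZMod d, (if y = x then (0:ℝ) else 1) * q (x - s, y, z) := by
        rw [← Finset.sum_add_distrib]
        exact Finset.sum_congr rfl fun x _ => Finset.sum_add_distrib
    _ = 2 * ∑ w : ZMod d × ZMod d, (if w.2 = w.1 + s then (0:ℝ) else 1) * ∑ z : Ω, q (w.1, w.2, z) := by
        rw [T1, T2]; ring

lemma ind_le_exp {d : ℕ} [NeZero d] (Qz : ZMod d × ZMod d → ℝ) (hQ : ∀ w, 0 ≤ Qz w)
    (v : ZMod d × ZMod d → ZMod d) (s : ZMod d) (hv : ∀ w, w.2 ≠ w.1 + s → v w ≠ 0) :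
    ∑ w : ZMod d × ZMod d, (if w.2 = w.1 + s then (0:ℝ) else 1) * Qz w ≤
      ∑ w : ZMod d × ZMod d, ((v w).val : ℝ) * Qz w := by
  refine Finset.sum_le_sum fun w _ => ?_
  by_cases h : w.2 = w.1 + s
  · rw [if_pos h, zero_mul]
    exact mul_nonneg (Nat.cast_nonneg _) (hQ w)
  · rw [if_neg h, one_mul]
    nth_rewrite 1 [show Qz w = 1 * Qz w by ring]
    refine mul_le_mul_of_nonneg_right ?_ (hQ w)
    exact_mod_cast Nat.one_le_iff_ne_zero.mpr (fun hz => (hv w h) (ZMod.val_eq_zero _ |>.mp hz))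

lemma linkAB {d : ℕ} [NeZero d] {Ω : Type} [Fintype Ω]
    (q : ZMod d × ZMod d × Ω → ℝ) (hq : ∀ w, 0 ≤ q w) :
    ∑ x : ZMod d, ∑ z : Ω, |(∑ y : ZMod d, q (x, y, z)) - (∑ x' : ZMod d, q (x', x, z))| ≤
      2 * expValXsubY (fun w => ∑ z : Ω, q (w.1, w.2, z)) := by
  have h := core_bound q hq 0
  simp only [sub_zero, add_zero] at h
  have habs : ∀ x : ZMod d, ∀ z : Ω,
      |(∑ y : ZMod d, q (x, y, z)) - (∑ x' : ZMod d, q (x', x, z))|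
      = |(∑ x' : ZMod d, q (x', x, z)) - (∑ y : ZMod d, q (x, y, z))| := fun x z => abs_sub_comm _ _
  rw [Finset.sum_congr rfl fun x _ => Finset.sum_congr rfl fun z _ => habs x z]
  refine h.trans ?_
  have := ind_le_exp (fun w => ∑ z : Ω, q (w.1, w.2, z))
    (fun w => Finset.sum_nonneg fun z _ => hq _) (fun w => w.1 - w.2) 0
    (fun w hw => sub_ne_zero_of_ne fun he => hw (by rw [add_zero, he]))
  simp only [add_zero] at this
  rw [expValXsubY]
  exact by linarith [this]

lemma linkBA {d : ℕ} [NeZero d] {Ω : Type} [Fintype Ω]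
    (q : ZMod d × ZMod d × Ω → ℝ) (hq : ∀ w, 0 ≤ q w) :
    ∑ x : ZMod d, ∑ z : Ω, |(∑ x' : ZMod d, q (x', x, z)) - (∑ y : ZMod d, q (x, y, z))| ≤
      2 * expValYsubX (fun w => ∑ z : Ω, q (w.1, w.2, z)) := by
  have h := core_bound q hq 0
  simp only [sub_zero, add_zero] at h
  refine h.trans ?_
  have := ind_le_exp (fun w => ∑ z : Ω, q (w.1, w.2, z))
    (fun w => Finset.sum_nonneg fun z _ => hq _) (fun w => w.2 - w.1) 0
    (fun w hw => sub_ne_zero_of_ne fun he => hw (by rw [add_zero, ← he]))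
  simp only [add_zero] at this
  rw [expValYsubX]
  exact by linarith [this]

lemma linkWrap {d : ℕ} [NeZero d] {Ω : Type} [Fintype Ω]
    (q : ZMod d × ZMod d × Ω → ℝ) (hq : ∀ w, 0 ≤ q w) :
    ∑ x : ZMod d, ∑ z : Ω, |(∑ x' : ZMod d, q (x', x, z)) - (∑ y : ZMod d, q (x - 1, y, z))| ≤
      2 * expValYsubXsubOne (fun w => ∑ z : Ω, q (w.1, w.2, z)) := by
  have h := core_bound q hq 1
  refine h.trans ?_
  have := ind_le_exp (fun w => ∑ z : Ω, q (w.1, w.2, z))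
    (fun w => Finset.sum_nonneg fun z _ => hq _) (fun w => w.2 - w.1 - 1) 1
    (fun w hw => fun he => hw (by
      have he' : w.2 - w.1 - 1 = 0 := he
      rw [sub_sub, sub_eq_zero] at he'; exact he'))
  rw [expValYsubXsubOne]
  exact by linarith [this]

/-- Setting index along the chain, wrapping modulo `N`. -/
def sigf (N : ℕ) [NeZero N] (m : ℕ) : Fin N :=
  ⟨m % N, Nat.mod_lt m (Nat.pos_of_ne_zero (NeZero.ne N))⟩

lemma sigf_val (N : ℕ) [NeZero N] (m : ℕ) : (sigf N m).val = m % N := rfl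

/-- The `(X,Z)`-conditional marginal at settings `(j,j)`. -/
noncomputable def Af (d N : ℕ) [NeZero d] {Γ Ω : Type} [Fintype Ω]
    (p : Fin N → Fin N → Γ → (ZMod d × ZMod d × Ω → ℝ)) (c : Γ)
    (j : Fin N) (u : ZMod d) (z : Ω) : ℝ := ∑ y : ZMod d, p j j c (u, y, z)

/-- The `(Y,Z)`-conditional marginal at settings `(j,j)`. -/
noncomputable def Bf (d N : ℕ) [NeZero d] {Γ Ω : Type} [Fintype Ω]
    (p : Fin N → Fin N → Γ → (ZMod d × ZMod d × Ω → ℝ)) (c : Γ)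
    (j : Fin N) (v : ZMod d) (z : Ω) : ℝ := ∑ xx : ZMod d, p j j c (xx, v, z)

/-- Bound for the off-diagonal chain links. -/
noncomputable def Mf (d N : ℕ) [NeZero d] [NeZero N]
    (Q : Fin N → Fin N → (ZMod d × ZMod d → ℝ)) (j : Fin N) : ℝ :=
  if h : j.val + 1 < N then 2 * expValYsubX (Q ⟨j.val+1, h⟩ j)
  else 2 * expValYsubXsubOne
    (Q ⟨0, Nat.pos_of_ne_zero (NeZero.ne N)⟩
       ⟨N-1, Nat.sub_lt (Nat.pos_of_ne_zero (NeZero.ne N)) one_pos⟩)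

/-- The chain of `2N+1` functions interpolating between `A_a` and its shift. -/
noncomputable def Gf (d N : ℕ) [NeZero d] [NeZero N] {Γ Ω : Type} [Fintype Ω]
    (p : Fin N → Fin N → Γ → (ZMod d × ZMod d × Ω → ℝ)) (c : Γ) (α : ℕ)
    (i : ℕ) (u : ZMod d) (z : Ω) : ℝ :=
  (if i % 2 = 0 then Af d N p c (sigf N (α + i/2)) else Bf d N p c (sigf N (α + i/2)))
    (if α + i/2 < N then u else u - 1) z

lemma Gf_even (d N : ℕ) [NeZero d] [NeZero N] {Γ Ω : Type} [Fintype Ω]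
    (p : Fin N → Fin N → Γ → (ZMod d × ZMod d × Ω → ℝ)) (c : Γ) (α : ℕ) (t : ℕ)
    (u : ZMod d) (z : Ω) :
    Gf d N p c α (2*t) u z = Af d N p c (sigf N (α + t)) (if α + t < N then u else u - 1) z := by
  have h1 : (2*t) % 2 = 0 := by omega
  have h2 : (2*t) / 2 = t := by omega
  simp [Gf, h1, h2]

lemma Gf_odd (d N : ℕ) [NeZero d] [NeZero N] {Γ Ω : Type} [Fintype Ω]
    (p : Fin N → Fin N → Γ → (ZMod d × ZMod d × Ω → ℝ)) (c : Γ) (α : ℕ) (t : ℕ)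
    (u : ZMod d) (z : Ω) :
    Gf d N p c α (2*t+1) u z = Bf d N p c (sigf N (α + t)) (if α + t < N then u else u - 1) z := by
  have h1 : (2*t+1) % 2 = 1 := by omega
  have h2 : (2*t+1) / 2 = t := by omega
  simp [Gf, h1, h2]

set_option maxHeartbeats 1000000 in
theorem nonextendibility_bound (d N : ℕ) [NeZero d] (hN : 0 < N)
    (Γ Ω : Type) [Fintype Γ] [Fintype Ω] [Nonempty Γ] [Nonempty Ω]
    (p : Fin N → Fin N → Γ → (ZMod d × ZMod d × Ω → ℝ))
    (hnonneg : ∀ a b c w, 0 ≤ p a b c w)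
    (hsum : ∀ a b c, ∑ w, p a b c w = 1)
    -- (i) the (X,Y)-marginal does not depend on c
    (hXY : ∀ a b c c' x y, ∑ z, p a b c (x, y, z) = ∑ z, p a b c' (x, y, z))
    -- (ii) the (X,Z)-marginal does not depend on b
    (hXZ : ∀ a b b' c x z, ∑ y, p a b c (x, y, z) = ∑ y, p a b' c (x, y, z))
    -- (iii) the (Y,Z)-marginal does not depend on a
    (hYZ : ∀ a a' b c y z, ∑ x, p a b c (x, y, z) = ∑ x, p a' b c (x, y, z)) :
    ∀ (a b : Fin N) (c : Γ) (x : ZMod d),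
      (1 / d) * ∑ z : Ω, |(∑ y : ZMod d, p a b c (x, y, z)) -
          (1 / d) * (∑ x' : ZMod d, ∑ y : ZMod d, p a b c (x', y, z))| ≤
        (d / 4) * chainedIN d N hN
          (fun a' b' w => ∑ z : Ω, p a' b' c (w.1, w.2, z)) := by
  intro a b c x
  haveI : NeZero N := ⟨hN.ne'⟩
  have hdpos : 0 < d := Nat.pos_of_ne_zero (NeZero.ne d)
  have hdR : (0:ℝ) < (d:ℝ) := by exact_mod_cast hdpos
  set Qm : Fin N → Fin N → (ZMod d × ZMod d → ℝ) :=
    fun a' b' w => ∑ z : Ω, p a' b' c (w.1, w.2, z) with hQm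
  have hQmnn : ∀ (a' b' : Fin N) (w : ZMod d × ZMod d), 0 ≤ Qm a' b' w :=
    fun a' b' w => Finset.sum_nonneg fun z _ => hnonneg a' b' c _
  set I : ℝ := chainedIN d N hN Qm with hIdef
  have hExy0 : ∀ π : ZMod d × ZMod d → ℝ, (∀ w, 0 ≤ π w) → 0 ≤ expValXsubY π := fun π h =>
    Finset.sum_nonneg fun w _ => mul_nonneg (Nat.cast_nonneg _) (h w)
  have hEyx0 : ∀ π : ZMod d × ZMod d → ℝ, (∀ w, 0 ≤ π w) → 0 ≤ expValYsubX π := fun π h =>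
    Finset.sum_nonneg fun w _ => mul_nonneg (Nat.cast_nonneg _) (h w)
  have hEw0 : ∀ π : ZMod d × ZMod d → ℝ, (∀ w, 0 ≤ π w) → 0 ≤ expValYsubXsubOne π := fun π h =>
    Finset.sum_nonneg fun w _ => mul_nonneg (Nat.cast_nonneg _) (h w)
  have hI0 : 0 ≤ I := by
    rw [hIdef, chainedIN]
    refine add_nonneg (add_nonneg (Finset.sum_nonneg fun i _ =>
      add_nonneg (hExy0 _ (hQmnn _ _)) (hEyx0 _ (hQmnn _ _))) (hExy0 _ (hQmnn _ _)))
      (hEw0 _ (hQmnn _ _))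
  -- abbreviations
  have hAb : ∀ (j b' : Fin N) (u : ZMod d) (z : Ω),
      Af d N p c j u z = ∑ y : ZMod d, p j b' c (u, y, z) :=
    fun j b' u z => hXZ j j b' c u z
  have hBa : ∀ (j a' : Fin N) (v : ZMod d) (z : Ω),
      Bf d N p c j v z = ∑ xx : ZMod d, p a' j c (xx, v, z) :=
    fun j a' v z => hYZ j a' j c v z
  set s' : ZMod d → ℝ := fun u => ∑ z : Ω, |Af d N p c a u z - Af d N p c a (u + 1) z| with hs'
  set S : ℝ := ∑ u : ZMod d, s' u with hS
  have hs'nn : ∀ u, 0 ≤ s' u := fun u => Finset.sum_nonneg fun z _ => abs_nonneg _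
  have hS0 : 0 ≤ S := Finset.sum_nonneg fun u _ => hs'nn u
  -- Step 1/2 : per-shift bound
  have hcastk : ∀ k : ZMod d, ((k.val : ℕ) : ZMod d) = k := fun k => ZMod.natCast_rightInverse k
  have hDk : ∀ k : ZMod d, (∑ z : Ω, |Af d N p c a x z - Af d N p c a (x + k) z|) ≤ S / 2 := by
    intro k
    have hle : k.val ≤ d := (ZMod.val_lt k).le
    have fwd : (∑ z : Ω, |Af d N p c a x z - Af d N p c a (x + k) z|) ≤
        ∑ j ∈ Finset.range k.val, s' (x + (j : ZMod d)) := by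
      have h := tele_sum (Finset.univ : Finset Ω)
        (fun j z => Af d N p c a (x + (j : ZMod d)) z) k.val
      simp only [Nat.cast_zero, add_zero, hcastk k] at h
      refine h.trans (le_of_eq (Finset.sum_congr rfl fun j _ => ?_))
      simp only [hs']
      refine Finset.sum_congr rfl fun z _ => ?_
      rw [show x + ((j+1 : ℕ) : ZMod d) = (x + (j : ZMod d)) + 1 by push_cast; ring]
    have bwd : (∑ z : Ω, |Af d N p c a x z - Af d N p c a (x + k) z|) ≤
        ∑ j ∈ Finset.range (d - k.val), s' (x + k + (j : ZMod d)) := by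
      have h := tele_sum (Finset.univ : Finset Ω)
        (fun j z => Af d N p c a (x + k + (j : ZMod d)) z) (d - k.val)
      have hend : x + k + ((d - k.val : ℕ) : ZMod d) = x := by
        rw [Nat.cast_sub hle, ZMod.natCast_self, hcastk k]
        ring
      simp only [Nat.cast_zero, add_zero, hend] at h
      have flip : (∑ z : Ω, |Af d N p c a x z - Af d N p c a (x + k) z|)
          = ∑ z : Ω, |Af d N p c a (x + k) z - Af d N p c a x z| :=
        Finset.sum_congr rfl fun z _ => abs_sub_comm _ _
      rw [flip]
      refine h.trans (le_of_eq (Finset.sum_congr rfl fun j _ => ?_))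
      simp only [hs']
      refine Finset.sum_congr rfl fun z _ => ?_
      rw [show x + k + ((j+1 : ℕ) : ZMod d) = (x + k + (j : ZMod d)) + 1 by push_cast; ring]
    have hsplit : (∑ j ∈ Finset.range k.val, s' (x + (j : ZMod d)))
        + (∑ j ∈ Finset.range (d - k.val), s' (x + k + (j : ZMod d))) = S := by
      rw [show (∑ j ∈ Finset.range (d - k.val), s' (x + k + (j : ZMod d)))
          = ∑ j ∈ Finset.range (d - k.val), s' (x + ((k.val + j : ℕ) : ZMod d)) from
        Finset.sum_congr rfl fun j _ => congrArg s' (by rw [Nat.cast_add, hcastk k]; ring)]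
      rw [← Finset.sum_range_add (fun j => s' (x + (j : ZMod d))) k.val (d - k.val)]
      rw [Nat.add_sub_cancel' hle]
      rw [hS]
      rw [sum_range_zmod d (fun u => s' (x + u))]
      exact Fintype.sum_equiv (Equiv.addLeft x) _ _ fun u => rfl
    have hD2 := add_le_add fwd bwd
    rw [hsplit] at hD2
    linarith
  have hsum_shift : ∀ z : Ω, ∑ x' : ZMod d, Af d N p c a x' z
      = ∑ k : ZMod d, Af d N p c a (x + k) z := fun z =>
    (Fintype.sum_equiv (Equiv.addLeft x) (fun k => Af d N p c a (x + k) z)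
      (fun x' => Af d N p c a x' z) (fun k => rfl)).symm
  have hper : ∀ z : Ω, |Af d N p c a x z - (1/(d:ℝ)) * ∑ x' : ZMod d, Af d N p c a x' z|
      ≤ (1/(d:ℝ)) * ∑ k : ZMod d, |Af d N p c a x z - Af d N p c a (x + k) z| := by
    intro z
    have hconst : ∑ _k : ZMod d, Af d N p c a x z = (d:ℝ) * Af d N p c a x z := by
      rw [Finset.sum_const, Finset.card_univ, ZMod.card, nsmul_eq_mul]
    have hid : Af d N p c a x z - (1/(d:ℝ)) * ∑ x' : ZMod d, Af d N p c a x' z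
        = (1/(d:ℝ)) * ∑ k : ZMod d, (Af d N p c a x z - Af d N p c a (x + k) z) := by
      rw [Finset.sum_sub_distrib, hconst, ← hsum_shift z]
      field_simp
    rw [hid, abs_mul, abs_of_nonneg (by positivity : (0:ℝ) ≤ 1/(d:ℝ))]
    exact mul_le_mul_of_nonneg_left (Finset.abs_sum_le_sum_abs _ _) (by positivity)
  have hstep2 : ∑ k : ZMod d, ∑ z : Ω, |Af d N p c a x z - Af d N p c a (x + k) z|
      ≤ (d:ℝ) * (S / 2) := by
    calc ∑ k : ZMod d, ∑ z : Ω, |Af d N p c a x z - Af d N p c a (x + k) z|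
        ≤ ∑ _k : ZMod d, S/2 := Finset.sum_le_sum fun k _ => hDk k
      _ = (d:ℝ) * (S/2) := by rw [Finset.sum_const, Finset.card_univ, ZMod.card, nsmul_eq_mul]
  have main1 : (1/(d:ℝ)) * ∑ z : Ω,
      |Af d N p c a x z - (1/(d:ℝ)) * ∑ x' : ZMod d, Af d N p c a x' z| ≤ S / (2*(d:ℝ)) := by
    calc (1/(d:ℝ)) * ∑ z : Ω, |Af d N p c a x z - (1/(d:ℝ)) * ∑ x' : ZMod d, Af d N p c a x' z|
        ≤ (1/(d:ℝ)) * ∑ z : Ω,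
            ((1/(d:ℝ)) * ∑ k : ZMod d, |Af d N p c a x z - Af d N p c a (x + k) z|) :=
          mul_le_mul_of_nonneg_left (Finset.sum_le_sum fun z _ => hper z) (by positivity)
      _ = (1/(d:ℝ)^2) * ∑ k : ZMod d, ∑ z : Ω, |Af d N p c a x z - Af d N p c a (x + k) z| := by
          rw [← Finset.mul_sum, Finset.sum_comm]; ring
      _ ≤ (1/(d:ℝ)^2) * ((d:ℝ) * (S/2)) := mul_le_mul_of_nonneg_left hstep2 (by positivity)
      _ = S / (2*(d:ℝ)) := by field_simp
  -- Step 3 : chain bound S ≤ 2 I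
  have hGev : ∀ (t : ℕ) (u : ZMod d) (z : Ω), Gf d N p c a.val (2*t) u z
      = Af d N p c (sigf N (a.val + t)) (if a.val + t < N then u else u - 1) z :=
    fun t u z => Gf_even d N p c a.val t u z
  have hGod : ∀ (t : ℕ) (u : ZMod d) (z : Ω), Gf d N p c a.val (2*t+1) u z
      = Bf d N p c (sigf N (a.val + t)) (if a.val + t < N then u else u - 1) z :=
    fun t u z => Gf_odd d N p c a.val t u z
  have hsiga : sigf N a.val = a := Fin.ext (by
    show a.val % N = a.val
    exact Nat.mod_eq_of_lt a.isLt)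
  have hG0 : ∀ (u : ZMod d) (z : Ω), Gf d N p c a.val 0 u z = Af d N p c a u z := by
    intro u z
    have h := hGev 0 u z
    rw [show 2*0 = 0 by ring, show a.val + 0 = a.val from rfl] at h
    rw [h, if_pos a.isLt, hsiga]
  have hG2N : ∀ (u : ZMod d) (z : Ω), Gf d N p c a.val (2*N) u z = Af d N p c a (u - 1) z := by
    intro u z
    have h := hGev N u z
    rw [h, if_neg (by omega : ¬ (a.val + N < N)),
      show sigf N (a.val + N) = a from Fin.ext (by
        show (a.val + N) % N = a.val
        rw [Nat.add_mod_right]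
        exact Nat.mod_eq_of_lt a.isLt)]
  have hSdist : S = ∑ u : ZMod d, ∑ z : Ω,
      |Gf d N p c a.val 0 u z - Gf d N p c a.val (2*N) u z| := by
    have h1 : S = ∑ u : ZMod d, ∑ z : Ω, |Af d N p c a (u+1) z - Af d N p c a u z| := by
      rw [hS]
      refine Finset.sum_congr rfl fun u _ => ?_
      simp only [hs']
      exact Finset.sum_congr rfl fun z _ => abs_sub_comm _ _
    have h2 : ∑ u : ZMod d, ∑ z : Ω, |Af d N p c a (u+1) z - Af d N p c a u z|
        = ∑ u : ZMod d, ∑ z : Ω, |Af d N p c a u z - Af d N p c a (u-1) z| := by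
      refine Fintype.sum_equiv (Equiv.addRight (1 : ZMod d)) _ _ fun u => ?_
      simp [Equiv.coe_addRight, add_sub_cancel_right]
    rw [h1, h2]
    refine Finset.sum_congr rfl fun u _ => Finset.sum_congr rfl fun z _ => ?_
    rw [hG0, hG2N]
  have htel : S ≤ ∑ t ∈ Finset.range N,
      ((∑ u : ZMod d, ∑ z : Ω, |Gf d N p c a.val (2*t) u z - Gf d N p c a.val (2*t+1) u z|)
      + (∑ u : ZMod d, ∑ z : Ω, |Gf d N p c a.val (2*t+1) u z - Gf d N p c a.val (2*t+1+1) u z|)) := by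
    have h := tele_sum (Finset.univ : Finset (ZMod d × Ω))
      (fun i w => Gf d N p c a.val i w.1 w.2) (2*N)
    have hL : ∑ w : ZMod d × Ω, |Gf d N p c a.val 0 w.1 w.2 - Gf d N p c a.val (2*N) w.1 w.2|
        = ∑ u : ZMod d, ∑ z : Ω, |Gf d N p c a.val 0 u z - Gf d N p c a.val (2*N) u z| :=
      Fintype.sum_prod_type _
    have hR : ∀ i : ℕ, (∑ w : ZMod d × Ω,
        |Gf d N p c a.val i w.1 w.2 - Gf d N p c a.val (i+1) w.1 w.2|)
        = ∑ u : ZMod d, ∑ z : Ω, |Gf d N p c a.val i u z - Gf d N p c a.val (i+1) u z| :=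
      fun i => Fintype.sum_prod_type _
    rw [hSdist, ← hL]
    refine h.trans (le_of_eq ?_)
    rw [Finset.sum_congr rfl fun i _ => hR i]
    exact sum_range_two_mul N _
  have hlink : ∀ t : ℕ, t < N →
      (∑ u : ZMod d, ∑ z : Ω, |Gf d N p c a.val (2*t) u z - Gf d N p c a.val (2*t+1) u z|)
      + (∑ u : ZMod d, ∑ z : Ω, |Gf d N p c a.val (2*t+1) u z - Gf d N p c a.val (2*t+1+1) u z|)
      ≤ 2 * expValXsubY (Qm (sigf N (a.val + t)) (sigf N (a.val + t)))
        + Mf d N Qm (sigf N (a.val + t)) := by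
    intro t ht
    have haval : a.val < N := a.isLt
    have hpart1 : (∑ u : ZMod d, ∑ z : Ω,
        |Gf d N p c a.val (2*t) u z - Gf d N p c a.val (2*t+1) u z|)
        ≤ 2 * expValXsubY (Qm (sigf N (a.val + t)) (sigf N (a.val + t))) := by
      have hbase : ∑ u : ZMod d, ∑ z : Ω,
          |Af d N p c (sigf N (a.val+t)) u z - Bf d N p c (sigf N (a.val+t)) u z|
          ≤ 2 * expValXsubY (Qm (sigf N (a.val + t)) (sigf N (a.val + t))) := by
        have h := linkAB (p (sigf N (a.val+t)) (sigf N (a.val+t)) c) (fun w => hnonneg _ _ _ _)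
        simpa only [Af, Bf, hQm] using h
      by_cases hsh : a.val + t < N
      · refine le_of_eq_of_le
          (Finset.sum_congr rfl fun u _ => Finset.sum_congr rfl fun z _ => ?_) hbase
        simp only [hGev, hGod, if_pos hsh]
      · have hshift := sum_shift (fun u => ∑ z : Ω,
          |Af d N p c (sigf N (a.val+t)) u z - Bf d N p c (sigf N (a.val+t)) u z|) 1
        calc (∑ u : ZMod d, ∑ z : Ω,
              |Gf d N p c a.val (2*t) u z - Gf d N p c a.val (2*t+1) u z|)
            = ∑ u : ZMod d, ∑ z : Ω, |Af d N p c (sigf N (a.val+t)) (u-1) z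
                - Bf d N p c (sigf N (a.val+t)) (u-1) z| := by
              refine Finset.sum_congr rfl fun u _ => Finset.sum_congr rfl fun z _ => ?_
              simp only [hGev, hGod, if_neg hsh]
          _ = ∑ u : ZMod d, ∑ z : Ω, |Af d N p c (sigf N (a.val+t)) u z
                - Bf d N p c (sigf N (a.val+t)) u z| := hshift
          _ ≤ _ := hbase
    have h22 : ∀ (u : ZMod d) (z : Ω), Gf d N p c a.val (2*t+1+1) u z
        = Af d N p c (sigf N (a.val + (t+1))) (if a.val + (t+1) < N then u else u - 1) z := by
      intro u z
      rw [show 2*t+1+1 = 2*(t+1) by ring]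
      exact hGev (t+1) u z
    have hpart2 : (∑ u : ZMod d, ∑ z : Ω,
        |Gf d N p c a.val (2*t+1) u z - Gf d N p c a.val (2*t+1+1) u z|)
        ≤ Mf d N Qm (sigf N (a.val + t)) := by
      by_cases hcase : a.val + t + 1 < N
      · have hsh : a.val + t < N := by omega
        have hsh1 : a.val + (t+1) < N := by omega
        have hvt : (sigf N (a.val+t)).val = a.val + t := by
          show (a.val+t) % N = a.val + t
          exact Nat.mod_eq_of_lt hsh
        have hlt1 : (sigf N (a.val+t)).val + 1 < N := by omega
        have hst1 : sigf N (a.val + (t+1)) = ⟨(sigf N (a.val+t)).val + 1, hlt1⟩ := by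
          refine Fin.ext ?_
          show (a.val + (t+1)) % N = (sigf N (a.val+t)).val + 1
          rw [Nat.mod_eq_of_lt hsh1, hvt]
          omega
        have hMt : Mf d N Qm (sigf N (a.val+t))
            = 2 * expValYsubX (Qm (sigf N (a.val + (t+1))) (sigf N (a.val+t))) := by
          rw [Mf, dif_pos hlt1, hst1]
        rw [hMt]
        have hbase : ∑ u : ZMod d, ∑ z : Ω,
            |(∑ xx : ZMod d, p (sigf N (a.val+(t+1))) (sigf N (a.val+t)) c (xx, u, z))
             - (∑ y : ZMod d, p (sigf N (a.val+(t+1))) (sigf N (a.val+t)) c (u, y, z))|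
            ≤ 2 * expValYsubX (Qm (sigf N (a.val+(t+1))) (sigf N (a.val+t))) := by
          have h := linkBA (p (sigf N (a.val+(t+1))) (sigf N (a.val+t)) c)
            (fun w => hnonneg _ _ _ _)
          simpa only [hQm] using h
        refine le_of_eq_of_le
          (Finset.sum_congr rfl fun u _ => Finset.sum_congr rfl fun z _ => ?_) hbase
        simp only [hGod, h22, if_pos hsh, if_pos hsh1,
          hBa (sigf N (a.val+t)) (sigf N (a.val+(t+1))),
          hAb (sigf N (a.val+(t+1))) (sigf N (a.val+t))]
      · by_cases hwrap : a.val + t + 1 = N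
        · have hsh : a.val + t < N := by omega
          have hsh1 : ¬ (a.val + (t+1) < N) := by omega
          have hst : sigf N (a.val+t) = ⟨N-1, by omega⟩ := Fin.ext (by
            show (a.val+t) % N = N-1
            rw [Nat.mod_eq_of_lt hsh]; omega)
          have hst1 : sigf N (a.val + (t+1)) = ⟨0, hN⟩ := Fin.ext (by
            show (a.val + (t+1)) % N = 0
            rw [show a.val + (t+1) = N by omega, Nat.mod_self])
          have hnlt : ¬ ((sigf N (a.val+t)).val + 1 < N) := by
            rw [hst]; show ¬ (N-1+1 < N); omega
          have hMt : Mf d N Qm (sigf N (a.val+t))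
              = 2 * expValYsubXsubOne (Qm ⟨0, hN⟩ ⟨N-1, by omega⟩) := by
            rw [Mf, dif_neg hnlt]
          rw [hMt]
          have hbase : ∑ u : ZMod d, ∑ z : Ω,
              |(∑ xx : ZMod d, p ⟨0,hN⟩ ⟨N-1, by omega⟩ c (xx, u, z))
               - (∑ y : ZMod d, p ⟨0,hN⟩ ⟨N-1, by omega⟩ c (u-1, y, z))|
              ≤ 2 * expValYsubXsubOne (Qm ⟨0,hN⟩ ⟨N-1, by omega⟩) := by
            have h := linkWrap (p ⟨0,hN⟩ ⟨N-1, by omega⟩ c) (fun w => hnonneg _ _ _ _)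
            simpa only [hQm] using h
          refine le_of_eq_of_le
            (Finset.sum_congr rfl fun u _ => Finset.sum_congr rfl fun z _ => ?_) hbase
          simp only [hGod, h22, if_pos hsh, if_neg hsh1, hst, hst1,
            hBa ⟨N-1, by omega⟩ ⟨0, hN⟩, hAb ⟨0, hN⟩ ⟨N-1, by omega⟩]
        · have hshA : ¬ (a.val + t < N) := by omega
          have hsh1 : ¬ (a.val + (t+1) < N) := by omega
          have hvt : (sigf N (a.val+t)).val = a.val + t - N := by
            show (a.val+t) % N = a.val + t - N
            rw [Nat.mod_eq_sub_mod (by omega)]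
            exact Nat.mod_eq_of_lt (by omega)
          have hlt1 : (sigf N (a.val+t)).val + 1 < N := by omega
          have hst1 : sigf N (a.val + (t+1)) = ⟨(sigf N (a.val+t)).val + 1, hlt1⟩ := by
            refine Fin.ext ?_
            show (a.val + (t+1)) % N = (sigf N (a.val+t)).val + 1
            rw [Nat.mod_eq_sub_mod (by omega), Nat.mod_eq_of_lt (by omega), hvt]
            omega
          have hMt : Mf d N Qm (sigf N (a.val+t))
              = 2 * expValYsubX (Qm (sigf N (a.val + (t+1))) (sigf N (a.val+t))) := by
            rw [Mf, dif_pos hlt1, hst1]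
          rw [hMt]
          have hbase : ∑ u : ZMod d, ∑ z : Ω,
              |(∑ xx : ZMod d, p (sigf N (a.val+(t+1))) (sigf N (a.val+t)) c (xx, u, z))
               - (∑ y : ZMod d, p (sigf N (a.val+(t+1))) (sigf N (a.val+t)) c (u, y, z))|
              ≤ 2 * expValYsubX (Qm (sigf N (a.val+(t+1))) (sigf N (a.val+t))) := by
            have h := linkBA (p (sigf N (a.val+(t+1))) (sigf N (a.val+t)) c)
              (fun w => hnonneg _ _ _ _)
            simpa only [hQm] using h
          have hshift := sum_shift (fun u => ∑ z : Ω,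
            |(∑ xx : ZMod d, p (sigf N (a.val+(t+1))) (sigf N (a.val+t)) c (xx, u, z))
             - (∑ y : ZMod d, p (sigf N (a.val+(t+1))) (sigf N (a.val+t)) c (u, y, z))|) 1
          calc (∑ u : ZMod d, ∑ z : Ω,
                |Gf d N p c a.val (2*t+1) u z - Gf d N p c a.val (2*t+1+1) u z|)
              = ∑ u : ZMod d, ∑ z : Ω,
                |(∑ xx : ZMod d, p (sigf N (a.val+(t+1))) (sigf N (a.val+t)) c (xx, u-1, z))
                 - (∑ y : ZMod d, p (sigf N (a.val+(t+1))) (sigf N (a.val+t)) c (u-1, y, z))| := by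
                refine Finset.sum_congr rfl fun u _ => Finset.sum_congr rfl fun z _ => ?_
                simp only [hGod, h22, if_neg hshA, if_neg hsh1,
                  hBa (sigf N (a.val+t)) (sigf N (a.val+(t+1))),
                  hAb (sigf N (a.val+(t+1))) (sigf N (a.val+t))]
            _ = ∑ u : ZMod d, ∑ z : Ω,
                |(∑ xx : ZMod d, p (sigf N (a.val+(t+1))) (sigf N (a.val+t)) c (xx, u, z))
                 - (∑ y : ZMod d, p (sigf N (a.val+(t+1))) (sigf N (a.val+t)) c (u, y, z))| := hshift
            _ ≤ _ := hbase
    exact add_le_add hpart1 hpart2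
  have hSle : S ≤ ∑ t ∈ Finset.range N,
      (2 * expValXsubY (Qm (sigf N (a.val + t)) (sigf N (a.val + t)))
        + Mf d N Qm (sigf N (a.val + t))) :=
    htel.trans (Finset.sum_le_sum fun t ht => hlink t (Finset.mem_range.mp ht))
  set fnat : ℕ → ℝ :=
    fun m => 2 * expValXsubY (Qm (sigf N m) (sigf N m)) + Mf d N Qm (sigf N m) with hfnat
  have hfmod : ∀ m, fnat m = fnat (m % N) := by
    intro m
    have hsig : sigf N m = sigf N (m % N) := Fin.ext (by
      show m % N = (m % N) % N
      rw [Nat.mod_mod_of_dvd m dvd_rfl])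
    simp only [hfnat, hsig]
  have hre : ∑ t ∈ Finset.range N, fnat (a.val + t) = ∑ j ∈ Finset.range N, fnat j :=
    sum_range_shift N a.val fnat hfmod
  have hS2I : S ≤ 2 * I := by
    have h1 : S ≤ ∑ j ∈ Finset.range N, fnat j := by
      refine hSle.trans (le_of_eq ?_)
      rw [← hre]
    refine h1.trans (le_of_eq ?_)
    have hflast : fnat (N-1) = 2 * expValXsubY (Qm ⟨N-1, by omega⟩ ⟨N-1, by omega⟩)
        + 2 * expValYsubXsubOne (Qm ⟨0, hN⟩ ⟨N-1, by omega⟩) := by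
      have hsig : sigf N (N-1) = ⟨N-1, by omega⟩ := Fin.ext (by
        show (N-1) % N = N-1
        exact Nat.mod_eq_of_lt (by omega))
      have hnlt : ¬ ((⟨N-1, by omega⟩ : Fin N).val + 1 < N) := by
        show ¬ (N-1+1 < N); omega
      simp only [hfnat, hsig]
      rw [Mf, dif_neg hnlt]
    have hfj : ∀ (j : ℕ) (hj : j < N-1), fnat j
        = 2 * (expValXsubY (Qm (sigf N j) (sigf N j))
             + expValYsubX (Qm (sigf N (j+1)) (sigf N j))) := by
      intro j hj
      have hjN : j % N = j := Nat.mod_eq_of_lt (by omega)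
      have hlt : (sigf N j).val + 1 < N := by show j % N + 1 < N; omega
      have hmk : (⟨(sigf N j).val + 1, hlt⟩ : Fin N) = sigf N (j+1) := Fin.ext (by
        show j % N + 1 = (j+1) % N
        have h2 : (j+1) % N = j+1 := Nat.mod_eq_of_lt (by omega)
        omega)
      simp only [hfnat]
      rw [Mf, dif_pos hlt, hmk]
      ring
    have hattach : (∑ i ∈ (Finset.range (N-1)).attach,
        (expValXsubY (Qm ⟨i.1, by have := Finset.mem_range.mp i.2; omega⟩
                        ⟨i.1, by have := Finset.mem_range.mp i.2; omega⟩)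
         + expValYsubX (Qm ⟨i.1+1, by have := Finset.mem_range.mp i.2; omega⟩
                        ⟨i.1, by have := Finset.mem_range.mp i.2; omega⟩)))
        = ∑ j ∈ Finset.range (N-1),
          (expValXsubY (Qm (sigf N j) (sigf N j))
           + expValYsubX (Qm (sigf N (j+1)) (sigf N j))) := by
      rw [← Finset.sum_attach (Finset.range (N-1)) (fun j =>
        expValXsubY (Qm (sigf N j) (sigf N j))
        + expValYsubX (Qm (sigf N (j+1)) (sigf N j)))]
      refine Finset.sum_congr rfl fun i _ => ?_
      have hi : i.1 < N - 1 := Finset.mem_range.mp i.2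
      have h1 : sigf N i.1 = ⟨i.1, by omega⟩ := Fin.ext (by
        show i.1 % N = i.1
        exact Nat.mod_eq_of_lt (by omega))
      have h2 : sigf N (i.1+1) = ⟨i.1+1, by omega⟩ := Fin.ext (by
        show (i.1+1) % N = i.1+1
        exact Nat.mod_eq_of_lt (by omega))
      rw [h1, h2]
    rw [show N = (N-1)+1 by omega, Finset.sum_range_succ,
      Finset.sum_congr rfl fun j hj => hfj j (Finset.mem_range.mp hj), hflast,
      hIdef, chainedIN, hattach, ← Finset.mul_sum]
    ring
  have hfinal : S / (2*(d:ℝ)) ≤ (d:ℝ)/4 * I := by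
    rcases le_or_gt 2 d with hd2 | hd2
    · have hd2R : (2:ℝ) ≤ (d:ℝ) := by exact_mod_cast hd2
      rw [div_le_iff₀ (by positivity)]
      nlinarith [hI0, hS2I, hd2R,
        mul_nonneg (mul_nonneg (sub_nonneg.mpr hd2R) (by linarith : (0:ℝ) ≤ (d:ℝ)+2)) hI0]
    · have hd1 : d = 1 := by omega
      have hone : (1 : ZMod d) = 0 := by
        rw [← Nat.cast_one]
        exact (CharP.cast_eq_zero_iff (ZMod d) d 1).mpr (Nat.dvd_one.mpr hd1)
      have hSzero : S = 0 := by
        rw [hS]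
        refine Finset.sum_eq_zero fun u _ => ?_
        simp only [hs']
        refine Finset.sum_eq_zero fun z _ => ?_
        rw [hone, add_zero, sub_self, abs_zero]
      rw [hSzero, zero_div]
      exact mul_nonneg (by positivity) hI0
  calc (1/(d:ℝ)) * ∑ z : Ω, |(∑ y : ZMod d, p a b c (x, y, z))
        - (1/(d:ℝ)) * (∑ x' : ZMod d, ∑ y : ZMod d, p a b c (x', y, z))|
      = (1/(d:ℝ)) * ∑ z : Ω,
        |Af d N p c a x z - (1/(d:ℝ)) * ∑ x' : ZMod d, Af d N p c a x' z| := by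
        refine congrArg _ (Finset.sum_congr rfl fun z _ => ?_)
        rw [← hAb a b x z,
          show (∑ x' : ZMod d, ∑ y : ZMod d, p a b c (x', y, z))
            = ∑ x' : ZMod d, Af d N p c a x' z from
          Finset.sum_congr rfl fun x' _ => (hAb a b x' z).symm]
    _ ≤ S / (2*(d:ℝ)) := main1
    _ ≤ (d:ℝ)/4 * I := hfinal
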